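/- For every object X of T and every n ∈ ℤ, the canonical morphism hocolim_i τ_{≤i} X → X induces an isomorphism H^n(hocolim_i τ_{≤i} X) ≅ H^n(X). (Main computation in the proof of Proposition A.3; it holds without any non-degeneracy assumption on U.) -/

import Mathlib

/-!
Setting: `T` is a compactly generated triangulated category with suspension
functor `S = ⟦1⟧` admitting arbitrary (small) coproducts, `U ⊆ T_c` is a left
aisle in the full subcategory `T_c` of compact objects, and `T_{≤0}` is the
smallest strictly full subcategory of `T` containing `U` and stable under
arbitrary coproducts and under extensions.
-/

namespace CYPaper

open CategoryTheory CategoryTheory.Limits CategoryTheory.Pretriangulated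

universe v u

variable (T : Type u) [Category.{v} T] [HasZeroObject T] [Preadditive T]
  [HasShift T ℤ] [∀ n : ℤ, (shiftFunctor T n).Additive]
  [Pretriangulated T] [HasCoproducts.{v} T]

instance : HasColimitsOfShape (Discrete ℕ) T :=
  hasColimitsOfShape_of_equivalence (Discrete.equivalence Equiv.ulift.{v, 0})

/-- An object `C` is compact if `Hom(C, −)` (as an additive functor) commutes with
arbitrary (small) coproducts. -/
def IsCompactObj (C : T) : Prop :=
  ∀ I : Type v,
    PreservesColimitsOfShape (Discrete I) (preadditiveCoyoneda.obj (Opposite.op C))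

/-- The class of compact objects, i.e. the full triangulated subcategory `T_c`. -/
def Compacts : Set T := {C | IsCompactObj T C}

/-- `T` is compactly generated: there is a set `G` of compact objects such that an
object `X` is zero whenever `Hom(S^n G, X) = 0` for all `G ∈ G` and all `n : ℤ`. -/
def CompactlyGenerated : Prop :=
  ∃ G : Set T, Small.{v} ↥G ∧ (∀ C ∈ G, IsCompactObj T C) ∧
    ∀ X : T, (∀ C ∈ G, ∀ n : ℤ, ∀ f : C⟦n⟧ ⟶ X, f = 0) → IsZero X

/-- A left aisle in the (strictly) full subcategory of `T` with class of objects `A`: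
a strictly full additive subcategory stable under the suspension and under
extensions, whose inclusion admits a right adjoint (expressed by the existence of
coreflections). -/
structure LeftAisle (A : Set T) where
  carrier : Set T
  subset : carrier ⊆ A
  iso_closed : ∀ {X Y : T}, (X ≅ Y) → Y ∈ A → X ∈ carrier → Y ∈ carrier
  zero_mem : ∀ X : T, IsZero X → X ∈ A → X ∈ carrier
  sum_mem : ∀ {X Y : T}, X ∈ carrier → Y ∈ carrier →
    ∀ c : BinaryCofan X Y, Nonempty (IsColimit c) → c.pt ∈ A → c.pt ∈ carrier
  shift_mem : ∀ X ∈ carrier, X⟦(1 : ℤ)⟧ ∈ carrier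
  ext_mem : ∀ Tr : Triangle T, Tr ∈ (distTriang T) →
    Tr.obj₁ ∈ carrier → Tr.obj₃ ∈ carrier → Tr.obj₂ ∈ A → Tr.obj₂ ∈ carrier
  coreflect : ∀ X ∈ A, ∃ (U₀ : T) (_ : U₀ ∈ carrier) (ε : U₀ ⟶ X),
    ∀ R ∈ carrier, Function.Bijective fun g : R ⟶ U₀ => g ≫ ε

/-- The smallest strictly full subcategory of `T` containing `U` and stable under
arbitrary (small) coproducts and under extensions. -/
inductive aisleGen (U : Set T) : T → Prop
  | of (X : T) (hX : X ∈ U) : aisleGen U X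
  | iso (X Y : T) (e : X ≅ Y) (hX : aisleGen U X) : aisleGen U Y
  | coprod {I : Type v} (Y : I → T) (hY : ∀ i, aisleGen U (Y i)) : aisleGen U (∐ Y)
  | ext (Tr : Triangle T) (hT : Tr ∈ (distTriang T))
      (h₁ : aisleGen U Tr.obj₁) (h₃ : aisleGen U Tr.obj₃) : aisleGen U Tr.obj₂

/-- `T_{≤0}`. -/
def TLe0 (U : Set T) : Set T := {X | aisleGen T U X}

/-- `T_{≤n} := S^{−n} T_{≤0}`. -/
def TLe (U : Set T) (n : ℤ) : Set T := {X | X⟦n⟧ ∈ TLe0 T U}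

/-- `T_{>n} := (T_{≤n})^⊥`. -/
def TGt (U : Set T) (n : ℤ) : Set T := {Y | ∀ Z ∈ TLe T U n, ∀ f : Z ⟶ Y, f = 0}

/-- A truncation triangle `τ_{≤n} X → X → τ_{>n} X → S (τ_{≤n} X)` of `X` with
respect to the left aisle `T_{≤n}` on `T`. -/
structure TruncTriangle (U : Set T) (n : ℤ) (X : T) where
  low : T
  high : T
  ι : low ⟶ X
  π : X ⟶ high
  δ : high ⟶ low⟦(1 : ℤ)⟧
  low_mem : low ∈ TLe T U n
  high_mem : high ∈ TGt T U n
  dist : Triangle.mk ι π δ ∈ (distTriang T)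

/-- Data computing `H^n X = τ_{≥n} τ_{≤n} X = τ_{>n−1} τ_{≤n} X`: a truncation
triangle `t` of `X` at level `n` together with a truncation triangle `s` of
`τ_{≤n} X = t.low` at level `n − 1`; then `H^n X = s.high`. -/
structure HomologyData (U : Set T) (n : ℤ) (X : T) where
  t : TruncTriangle T U n X
  s : TruncTriangle T U (n - 1) t.low

/-- The morphism `H^n f : H^n X ⟶ H^n Y` induced by `f : X ⟶ Y` on the homology
objects, encoded by its defining compatibilities. -/
structure HomologyMapData (U : Set T) (n : ℤ) {X Y : T} (f : X ⟶ Y)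
    (dX : HomologyData T U n X) (dY : HomologyData T U n Y) where
  g : dX.t.low ⟶ dY.t.low
  hg : g ≫ dY.t.ι = dX.t.ι ≫ f
  h : dX.s.high ⟶ dY.s.high
  hh : dX.s.π ≫ h = g ≫ dY.s.π

/-- A truncation triangle at level `n`, with respect to the left aisle `U`, inside
the subcategory `T_c` of compact objects. -/
structure CTruncTriangle (U : Set T) (n : ℤ) (X : T) where
  low : T
  high : T
  ι : low ⟶ X
  π : X ⟶ high
  δ : high ⟶ low⟦(1 : ℤ)⟧
  low_mem : low⟦n⟧ ∈ U
  high_compact : IsCompactObj T high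
  high_orth : ∀ Z : T, Z⟦n⟧ ∈ U → ∀ f : Z ⟶ high, f = 0
  dist : Triangle.mk ι π δ ∈ (distTriang T)

/-- Data computing the homology `H^n X` with respect to the aisle `U` in `T_c`. -/
structure CHomologyData (U : Set T) (n : ℤ) (X : T) where
  t : CTruncTriangle T U n X
  s : CTruncTriangle T U (n - 1) t.low

/-- The morphism induced by `f` on `U`-homology objects in `T_c`. -/
structure CHomologyMapData (U : Set T) (n : ℤ) {X Y : T} (f : X ⟶ Y)
    (dX : CHomologyData T U n X) (dY : CHomologyData T U n Y) where
  g : dX.t.low ⟶ dY.t.low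
  hg : g ≫ dY.t.ι = dX.t.ι ≫ f
  h : dX.s.high ⟶ dY.s.high
  hh : dX.s.π ≫ h = g ≫ dY.s.π

/-- The left aisle `U ⊆ T_c` is non-degenerate: a morphism `f` of `T_c` is
invertible if and only if `H^p(f)` is invertible for all `p : ℤ`. -/
def UNondegenerate (U : Set T) : Prop :=
  ∀ ⦃X Y : T⦄, IsCompactObj T X → IsCompactObj T Y → ∀ f : X ⟶ Y,
    (IsIso f ↔ ∀ (p : ℤ) (dX : CHomologyData T U p X) (dY : CHomologyData T U p Y)
      (m : CHomologyMapData T U p f dX dY), IsIso m.h)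

/-- Condition (†): for each compact `X` there is an integer `N` such that
`Hom(X, S^N U') = 0` for every `U' ∈ U`. -/
def CondDagger (U : Set T) : Prop :=
  ∀ X : T, IsCompactObj T X → ∃ N : ℤ, ∀ U' ∈ U, ∀ f : X ⟶ U'⟦N⟧, f = 0

variable {T}

section Helpers

lemma inj_of_zero {HC X : T} (m : HC ⟶ X) {W : T}
    (h : ∀ f : W ⟶ HC, f ≫ m = 0 → f = 0) :
    Function.Injective (fun f : W ⟶ HC => f ≫ m) := by
  intro f g hfg
  simp only at hfg
  have := h (f - g) (by rw [Preadditive.sub_comp, hfg, sub_self])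
  rwa [sub_eq_zero] at this

lemma inj_of_iso {HC X : T} (m : HC ⟶ X) {A B : T} (e : A ≅ B)
    (h : Function.Injective (fun f : A ⟶ HC => f ≫ m)) :
    Function.Injective (fun f : B ⟶ HC => f ≫ m) := by
  intro f g hfg
  simp only at hfg
  have := h (a₁ := e.hom ≫ f) (a₂ := e.hom ≫ g)
    (by simp only [Category.assoc, hfg])
  rwa [cancel_epi e.hom] at this

lemma surj_of_iso {HC X : T} (m : HC ⟶ X) {A B : T} (e : A ≅ B)
    (h : Function.Surjective (fun f : A ⟶ HC => f ≫ m)) :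
    Function.Surjective (fun f : B ⟶ HC => f ≫ m) := by
  intro g
  obtain ⟨a, ha⟩ := h (e.hom ≫ g)
  simp only at ha
  exact ⟨e.inv ≫ a, by simp [Category.assoc, ha]⟩

lemma aisleGen_shift_one {U : Set T} (hU : ∀ V ∈ U, V⟦(1:ℤ)⟧ ∈ U) {V : T}
    (hV : aisleGen T U V) : aisleGen T U (V⟦(1:ℤ)⟧) := by
  induction hV with
  | of X hX => exact .of _ (hU X hX)
  | iso X Y e _ ih => exact .iso _ _ ((shiftFunctor T (1:ℤ)).mapIso e) ih
  | coprod Y _ ih =>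
      exact .iso _ _ (asIso (sigmaComparison (shiftFunctor T (1:ℤ)) Y)) (.coprod _ ih)
  | ext Tr hTr _ _ ih1 ih3 =>
      exact .ext _ (Pretriangulated.Triangle.shift_distinguished Tr hTr 1) ih1 ih3

lemma aisleGen_shift_nat {U : Set T} (hU : ∀ V ∈ U, V⟦(1:ℤ)⟧ ∈ U) {V : T}
    (hV : aisleGen T U V) (k : ℕ) : aisleGen T U (V⟦(k : ℤ)⟧) := by
  induction k with
  | zero => exact .iso _ _ ((shiftFunctorZero T ℤ).symm.app V) hV
  | succ k ih =>
      exact .iso _ _ ((shiftFunctorAdd' T (k : ℤ) 1 ((k+1 : ℕ) : ℤ)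
        (by push_cast; ring)).symm.app V) (aisleGen_shift_one hU ih)

lemma aisleGen_shift_nonneg {U : Set T} (hU : ∀ V ∈ U, V⟦(1:ℤ)⟧ ∈ U) {V : T}
    (hV : aisleGen T U V) (z : ℤ) (hz : 0 ≤ z) : aisleGen T U (V⟦z⟧) := by
  obtain ⟨k, rfl⟩ := Int.eq_ofNat_of_zero_le hz
  exact aisleGen_shift_nat hU hV k

lemma TLe_mono {U : Set T} (hU : ∀ V ∈ U, V⟦(1:ℤ)⟧ ∈ U) {a b : ℤ} (hab : a ≤ b) {W : T}
    (hW : W ∈ TLe T U a) : W ∈ TLe T U b := by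
  have h1 : aisleGen T U ((W⟦a⟧)⟦b - a⟧) :=
    aisleGen_shift_nonneg hU hW (b - a) (by omega)
  exact .iso _ _ ((shiftFunctorAdd' T a (b-a) b (by ring)).symm.app W) h1

lemma TLe_shift {U : Set T} (hU : ∀ V ∈ U, V⟦(1:ℤ)⟧ ∈ U) {n : ℤ} {W : T}
    (hW : W ∈ TLe T U n) : W⟦(1:ℤ)⟧ ∈ TLe T U n := by
  have h1 : aisleGen T U ((W⟦n⟧)⟦(1:ℤ)⟧) := aisleGen_shift_one hU hW
  exact .iso _ _ ((shiftFunctorComm T n 1).app W) h1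

lemma hom_zero_TGt {U : Set T} {n : ℤ} {W Y : T} (hW : W ∈ TLe T U n)
    (hY : Y ∈ TGt T U n) (f : W ⟶ Y) : f = 0 := hY W hW f

lemma hom_zero_TGt_neg {U : Set T} (hU : ∀ V ∈ U, V⟦(1:ℤ)⟧ ∈ U) {n : ℤ} {W Y : T}
    (hW : W ∈ TLe T U n) (hY : Y ∈ TGt T U n) (f : W ⟶ Y⟦(-1:ℤ)⟧) : f = 0 := by
  have h : f⟦(1:ℤ)⟧' ≫ (shiftFunctorCompIsoId T (-1) 1 (by ring)).hom.app Y = 0 :=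
    hY _ (TLe_shift hU hW) _
  have h2 : f⟦(1:ℤ)⟧' = 0 := by
    rw [← cancel_mono ((shiftFunctorCompIsoId T (-1) 1 (by ring)).hom.app Y), zero_comp]
    exact h
  apply (shiftFunctor T (1:ℤ)).map_injective
  rw [h2, Functor.map_zero]

end Helpers
section Trunc
set_option linter.unusedSectionVars false

variable {U : Set T} (hU : ∀ V ∈ U, V⟦(1:ℤ)⟧ ∈ U)
include hU

/-- `ι : τ_{≤n} X ⟶ X` is a coreflection into `T_{≤n}`. -/
lemma trunc_corefl {n : ℤ} {X : T} (t : TruncTriangle T U n X) {W : T}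
    (hW : W ∈ TLe T U n) :
    Function.Bijective (fun g : W ⟶ t.low => g ≫ t.ι) := by
  constructor
  · apply inj_of_zero
    intro g hg
    obtain ⟨w, hw⟩ := Pretriangulated.Triangle.coyoneda_exact₂ _
      (inv_rot_of_distTriang _ t.dist) g hg
    have : w = 0 := hom_zero_TGt_neg hU hW t.high_mem w
    rw [hw, this, zero_comp]; rfl
  · intro f
    have hf : f ≫ t.π = 0 := hom_zero_TGt hW t.high_mem _
    obtain ⟨g, hg⟩ := Pretriangulated.Triangle.coyoneda_exact₂ _ t.dist f hf
    exact ⟨g, hg.symm⟩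

/-- `π : X ⟶ τ_{>n} X` is a reflection into `T_{>n}`. -/
lemma trunc_refl {n : ℤ} {X : T} (t : TruncTriangle T U n X) {Y : T}
    (hY : Y ∈ TGt T U n) :
    Function.Bijective (fun g : t.high ⟶ Y => t.π ≫ g) := by
  constructor
  · intro g g' hgg
    simp only at hgg
    obtain ⟨w, hw⟩ := Pretriangulated.Triangle.yoneda_exact₃ _ t.dist (g - g') (by
      erw [Preadditive.comp_sub]
      show t.π ≫ g - t.π ≫ g' = 0
      rw [hgg, sub_self])
    have hw0 : w = 0 := hom_zero_TGt (TLe_shift hU t.low_mem) hY w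
    rw [← sub_eq_zero, hw, hw0, comp_zero]; rfl
  · intro f
    have hf : t.ι ≫ f = 0 := hom_zero_TGt t.low_mem hY _
    obtain ⟨g, hg⟩ := Pretriangulated.Triangle.yoneda_exact₂ _ t.dist f hf
    exact ⟨g, hg.symm⟩

end Trunc
section Compact
set_option linter.unusedSectionVars false

/-- Every morphism into an `ℕ`-indexed coproduct decomposes as a finite sum. -/
def SurjFact (W : T) : Prop :=
  ∀ (Y : ℕ → T) (e : W ⟶ ∐ Y), ∃ (N : ℕ) (g : ∀ i, W ⟶ Y i),
    e = ∑ i ∈ Finset.range N, g i ≫ Sigma.ι Y i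

lemma sum_extend {M : Type*} [AddCommMonoid M] (f : ℕ → M) (N K : ℕ) (h : N ≤ K) :
    ∑ i ∈ Finset.range N, f i = ∑ i ∈ Finset.range K, (if i < N then f i else 0) := by
  rw [← Finset.sum_subset (Finset.range_subset_range.mpr h)
    (fun i _ hi => if_neg (fun hc => hi (Finset.mem_range.mpr hc)))]
  apply Finset.sum_congr rfl
  intro i hi
  rw [if_pos (Finset.mem_range.mp hi)]

lemma surjFact_of_isCompact {W : T} (hW : IsCompactObj T W) : SurjFact W := by
  intro Y e
  haveI h1 : PreservesColimitsOfShape (Discrete (ULift.{v} ℕ))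
      (preadditiveCoyoneda.obj (Opposite.op W)) := hW _
  haveI h2 : PreservesColimitsOfShape (Discrete ℕ)
      (preadditiveCoyoneda.obj (Opposite.op W)) :=
    preservesColimitsOfShape_of_equiv (Discrete.equivalence Equiv.ulift.{v,0}) _
  set H := preadditiveCoyoneda.obj (Opposite.op W) with hH
  have hc : IsColimit (H.mapCocone (colimit.cocone (Discrete.functor Y))) :=
    isColimitOfPreserves H (colimit.isColimit _)
  let Q : AddSubgroup (W ⟶ ∐ Y) := {
    carrier := {e | ∃ (N : ℕ) (g : ∀ i, W ⟶ Y i),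
      e = ∑ i ∈ Finset.range N, g i ≫ Sigma.ι Y i}
    zero_mem' := ⟨0, fun _ => 0, by simp⟩
    add_mem' := by
      rintro a b ⟨N₁, g₁, rfl⟩ ⟨N₂, g₂, rfl⟩
      refine ⟨max N₁ N₂, fun i => (if i < N₁ then g₁ i else 0) +
        (if i < N₂ then g₂ i else 0), ?_⟩
      rw [sum_extend (fun i => g₁ i ≫ Sigma.ι Y i) N₁ (max N₁ N₂) (le_max_left _ _),
        sum_extend (fun i => g₂ i ≫ Sigma.ι Y i) N₂ (max N₁ N₂) (le_max_right _ _),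
        ← Finset.sum_add_distrib]
      apply Finset.sum_congr rfl
      intro i _
      rw [Preadditive.add_comp]
      congr 1 <;> [skip; skip] <;>
      · split <;> simp
    neg_mem' := by
      rintro a ⟨N, g, rfl⟩
      exact ⟨N, fun i => -(g i), by simp [Preadditive.neg_comp]⟩ }
  let χ : ∀ i : ℕ, H.obj (Y i) ⟶ AddCommGrpCat.of Q := fun i => AddCommGrpCat.ofHom
    { toFun := fun f => ⟨f ≫ Sigma.ι Y i, i+1,
        (fun j => if h : j = i then f ≫ eqToHom (congrArg Y h).symm else 0), by
          rw [Finset.sum_eq_single_of_mem i (Finset.mem_range.mpr (Nat.lt_succ_self i))]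
          · simp; erw [Category.comp_id]
          · intro j _ hj
            simp [dif_neg hj]⟩
      map_zero' := by apply Subtype.ext; simp [zero_comp]; exact zero_comp
      map_add' := fun f f' => by
        apply Subtype.ext
        exact Preadditive.add_comp W (Y i) (∐ Y) f f' (Sigma.ι Y i) }
  let cQ : Cocone ((Discrete.functor Y) ⋙ H) :=
    { pt := AddCommGrpCat.of Q
      ι := Discrete.natTrans (fun i => χ i.as) }
  let ψ := hc.desc cQ
  let incl : AddCommGrpCat.of Q ⟶ H.obj (∐ Y) := AddCommGrpCat.ofHom (AddSubgroup.subtype Q : _ →+ (W ⟶ ∐ Y))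
  have hcomp : ψ ≫ incl = 𝟙 _ := by
    apply hc.hom_ext
    intro j
    rw [← Category.assoc]
    have : (H.mapCocone (colimit.cocone (Discrete.functor Y))).ι.app j ≫ ψ = χ j.as :=
      hc.fac cQ j
    rw [this]
    apply AddCommGrpCat.ext
    intro f
    rfl
  have he : incl (ψ e) = e := ConcreteCategory.congr_hom hcomp e
  obtain ⟨N, g, hg⟩ := (show Q from ψ e).2
  exact ⟨N, g, by rw [← he]; exact hg⟩

lemma surjFact_of_iso {A B : T} (e : A ≅ B) (h : SurjFact A) : SurjFact B := by
  intro Y x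
  obtain ⟨N, g, hg⟩ := h Y (e.hom ≫ x)
  refine ⟨N, fun i => e.inv ≫ g i, ?_⟩
  have : x = e.inv ≫ (e.hom ≫ x) := by simp
  rw [this, hg, Preadditive.comp_sum]
  simp [Category.assoc]

lemma surjFact_shift {W : T} (h : SurjFact W) (z : ℤ) : SurjFact (W⟦z⟧) := by
  intro Y e
  let adj : shiftFunctor T z ⊣ shiftFunctor T (-z) := (shiftEquiv T z).toAdjunction
  let Φ := adj.homEquiv W (∐ Y)
  obtain ⟨N, g, hg⟩ := h (fun i => (Y i)⟦(-z)⟧)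
    (Φ e ≫ inv (sigmaComparison (shiftFunctor T (-z)) Y))
  have h1 : Φ e = ∑ i ∈ Finset.range N, g i ≫ (Sigma.ι Y i)⟦(-z)⟧' := by
    have h0 : Φ e = (Φ e ≫ inv (sigmaComparison (shiftFunctor T (-z)) Y)) ≫
        sigmaComparison (shiftFunctor T (-z)) Y := by simp
    rw [h0, hg, Preadditive.sum_comp]
    apply Finset.sum_congr rfl
    intro i _
    rw [Category.assoc, ι_comp_sigmaComparison]
  refine ⟨N, fun i => (adj.homEquiv W (Y i)).symm (g i), ?_⟩
  apply Φ.injective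
  rw [h1]
  have h2 : Φ (∑ i ∈ Finset.range N, (adj.homEquiv W (Y i)).symm (g i) ≫ Sigma.ι Y i) =
      ∑ i ∈ Finset.range N, Φ ((adj.homEquiv W (Y i)).symm (g i) ≫ Sigma.ι Y i) := by
    show adj.homEquiv _ _ _ = _
    rw [Adjunction.homEquiv_unit, Functor.map_sum, Preadditive.comp_sum]
    apply Finset.sum_congr rfl
    intro i _
    rw [← Adjunction.homEquiv_unit]
  rw [h2]
  apply Finset.sum_congr rfl
  intro i _
  rw [Adjunction.homEquiv_naturality_right, Equiv.apply_symm_apply]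

/-- The projection out of an `ℕ`-indexed coproduct onto one factor. -/
noncomputable def sigmaProj (Y : ℕ → T) (j : ℕ) : (∐ Y) ⟶ Y j :=
  Sigma.desc (fun i => if h : i = j then eqToHom (congrArg Y h) else 0)

@[simp] lemma ι_sigmaProj (Y : ℕ → T) (i j : ℕ) :
    Sigma.ι Y i ≫ sigmaProj Y j =
      if h : i = j then eqToHom (congrArg Y h) else 0 := by
  simp [sigmaProj]

end Compact
section Hocolim
set_option linter.unusedSectionVars false

variable {U : Set T}
variable {X : T} (d : ∀ i : ℕ, TruncTriangle T U (i : ℤ) X)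
  (σ : ∀ i : ℕ, (d i).low ⟶ (d (i + 1)).low)

/-- Iterated transition maps. -/
def trTo (i : ℕ) : ∀ k : ℕ, (d i).low ⟶ (d (i + k)).low
  | 0 => 𝟙 _
  | (k+1) => trTo i k ≫ σ (i + k)

/-- Cast between equal levels. -/
def lowCast {a b : ℕ} (h : a = b) : (d a).low ⟶ (d b).low := eqToHom (by rw [h])

lemma lowCast_ι {a b : ℕ} (h : a = b) : lowCast d h ≫ (d b).ι = (d a).ι := by
  subst h; simp [lowCast]

lemma lowCast_κ {a b : ℕ} (h : a = b) :
    lowCast d h ≫ Sigma.ι (fun j : ℕ => (d j).low) b = Sigma.ι (fun j : ℕ => (d j).low) a := by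
  subst h; simp [lowCast]

/-- Total transition map `τ_{≤i} X ⟶ τ_{≤j} X` (zero if `j < i`). -/
def trLe (i j : ℕ) : (d i).low ⟶ (d j).low :=
  if h : i ≤ j then trTo d σ i (j - i) ≫ lowCast d (by omega) else 0

section

variable (hσ : ∀ i : ℕ, σ i ≫ (d (i + 1)).ι = (d i).ι)
include hσ

lemma trTo_ι (i : ℕ) : ∀ k : ℕ, trTo d σ i k ≫ (d (i + k)).ι = (d i).ι
  | 0 => Category.id_comp _
  | (k+1) => by
      show (trTo d σ i k ≫ σ (i + k)) ≫ (d (i + k + 1)).ι = (d i).ι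
      rw [Category.assoc, hσ (i + k)]
      exact trTo_ι i k

lemma trLe_ι (i j : ℕ) (h : i ≤ j) : trLe d σ i j ≫ (d j).ι = (d i).ι := by
  rw [trLe, dif_pos h, Category.assoc, lowCast_ι, trTo_ι d σ hσ]

end

section

variable {HC : T} {c : (∐ fun i : ℕ => (d i).low) ⟶ HC}
  {δ : HC ⟶ (∐ fun i : ℕ => (d i).low)⟦(1 : ℤ)⟧}
  (hdist : Triangle.mk (Sigma.desc fun i : ℕ => Sigma.ι (fun j : ℕ => (d j).low) i -
      σ i ≫ Sigma.ι (fun j : ℕ => (d j).low) (i + 1)) c δ ∈ (distTriang T))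
include hdist

lemma κ_c_step (i : ℕ) :
    Sigma.ι (fun j : ℕ => (d j).low) i ≫ c =
      σ i ≫ Sigma.ι (fun j : ℕ => (d j).low) (i + 1) ≫ c := by
  have h0 := comp_distTriang_mor_zero₁₂ _ hdist
  simp only [Triangle.mk_mor₁, Triangle.mk_mor₂] at h0
  have h1 : (Sigma.ι (fun j : ℕ => (d j).low) i -
      σ i ≫ Sigma.ι (fun j : ℕ => (d j).low) (i + 1)) ≫ c = 0 := by
    have := Sigma.ι (fun j : ℕ => (d j).low) i ≫= h0
    erw [comp_zero, ← Category.assoc, Sigma.ι_desc] at this; exact this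
  rw [Preadditive.sub_comp, sub_eq_zero] at h1
  rw [h1, Category.assoc]

lemma κ_c_to (i : ℕ) : ∀ k : ℕ, Sigma.ι (fun j : ℕ => (d j).low) i ≫ c =
    trTo d σ i k ≫ Sigma.ι (fun j : ℕ => (d j).low) (i + k) ≫ c
  | 0 => by rw [trTo, Category.id_comp]; rfl
  | (k+1) => by
      rw [κ_c_to i k, trTo, Category.assoc]
      congr 1
      exact κ_c_step d σ hdist (i + k)

lemma κ_c_le (i j : ℕ) (h : i ≤ j) : Sigma.ι (fun j' : ℕ => (d j').low) i ≫ c =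
    trLe d σ i j ≫ Sigma.ι (fun j' : ℕ => (d j').low) j ≫ c := by
  rw [κ_c_to d σ hdist i (j - i), trLe, dif_pos h, Category.assoc]
  congr 1
  rw [← lowCast_κ d (show i + (j - i) = j by omega), Category.assoc]

end

lemma sum_comp_proj {W' : T} (N : ℕ) (g : ∀ i, W' ⟶ (d i).low) (j : ℕ) :
    (∑ i ∈ Finset.range N, g i ≫ Sigma.ι (fun j' : ℕ => (d j').low) i) ≫
      sigmaProj (fun j' : ℕ => (d j').low) j = if j < N then g j else 0 := by
  rw [Preadditive.sum_comp]
  by_cases h : j < N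
  · rw [if_pos h, Finset.sum_eq_single_of_mem j (Finset.mem_range.mpr h)]
    · rw [Category.assoc, ι_sigmaProj, dif_pos rfl]
      simp
    · intro i _ hij
      rw [Category.assoc, ι_sigmaProj, dif_neg hij, comp_zero]
  · rw [if_neg h]
    apply Finset.sum_eq_zero
    intro i hi
    have hij : i ≠ j := by
      have := Finset.mem_range.mp hi
      omega
    rw [Category.assoc, ι_sigmaProj, dif_neg hij, comp_zero]

lemma sum_comp_proj_succ {W' : T} (N : ℕ) (g : ∀ i, W' ⟶ (d (i+1)).low) (jj : ℕ) :
    (∑ i ∈ Finset.range N, g i ≫ Sigma.ι (fun j' : ℕ => (d j').low) (i+1)) ≫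
      sigmaProj (fun j' : ℕ => (d j').low) (jj+1) = if jj < N then g jj else 0 := by
  rw [Preadditive.sum_comp]
  by_cases h : jj < N
  · rw [if_pos h, Finset.sum_eq_single_of_mem jj (Finset.mem_range.mpr h)]
    · rw [Category.assoc, ι_sigmaProj, dif_pos rfl]
      simp
    · intro i _ hij
      rw [Category.assoc, ι_sigmaProj, dif_neg (by omega), comp_zero]
  · rw [if_neg h]
    apply Finset.sum_eq_zero
    intro i hi
    have := Finset.mem_range.mp hi
    rw [Category.assoc, ι_sigmaProj, dif_neg (by omega), comp_zero]

lemma sum_comp_proj_zero {W' : T} (N : ℕ) (g : ∀ i, W' ⟶ (d (i+1)).low) :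
    (∑ i ∈ Finset.range N, g i ≫ Sigma.ι (fun j' : ℕ => (d j').low) (i+1)) ≫
      sigmaProj (fun j' : ℕ => (d j').low) 0 = 0 := by
  rw [Preadditive.sum_comp]
  apply Finset.sum_eq_zero
  intro i _
  rw [Category.assoc, ι_sigmaProj, dif_neg (by omega), comp_zero]

/-- `1 - σ` is a monomorphism on maps from objects admitting finite decompositions. -/
lemma D_cancel {W' : T} (hW' : SurjFact W')
    (x : W' ⟶ ∐ fun i : ℕ => (d i).low)
    (hx : x ≫ (Sigma.desc fun i : ℕ => Sigma.ι (fun j : ℕ => (d j).low) i -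
      σ i ≫ Sigma.ι (fun j : ℕ => (d j).low) (i + 1)) = 0) : x = 0 := by
  obtain ⟨N, g0, hg0⟩ := hW' _ x
  set g : ∀ i, W' ⟶ (d i).low := fun i => if i < N then g0 i else 0 with hgdef
  have hsum : x = ∑ i ∈ Finset.range N, g i ≫ Sigma.ι (fun j : ℕ => (d j).low) i := by
    rw [hg0]
    apply Finset.sum_congr rfl
    intro i hi
    rw [hgdef]
    simp only [if_pos (Finset.mem_range.mp hi)]
  -- expand x ≫ D
  have hxD : (∑ i ∈ Finset.range N, g i ≫ Sigma.ι (fun j : ℕ => (d j).low) i) -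
      (∑ i ∈ Finset.range N, (g i ≫ σ i) ≫ Sigma.ι (fun j : ℕ => (d j).low) (i+1)) = 0 := by
    rw [← hx, hsum, Preadditive.sum_comp, ← Finset.sum_sub_distrib]
    apply Finset.sum_congr rfl
    intro i _
    simp only [Category.assoc]
    rw [Sigma.ι_desc, Preadditive.comp_sub]
  have hg : ∀ j, g j = 0 := by
    intro j
    induction j with
    | zero =>
        have h0 := congrArg (fun y => y ≫ sigmaProj (fun j' : ℕ => (d j').low) 0) hxD
        simp only [Preadditive.sub_comp, zero_comp] at h0
        rw [sum_comp_proj, sum_comp_proj_zero, sub_zero] at h0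
        by_cases h : 0 < N
        · rw [if_pos h] at h0; exact h0
        · rw [hgdef]; simp only [if_neg h]
    | succ j ih =>
        have h0 := congrArg (fun y => y ≫ sigmaProj (fun j' : ℕ => (d j').low) (j+1)) hxD
        simp only [Preadditive.sub_comp, zero_comp] at h0
        rw [sum_comp_proj, sum_comp_proj_succ, sub_eq_zero] at h0
        by_cases h : j + 1 < N
        · rw [if_pos h] at h0
          rw [h0]
          by_cases h' : j < N
          · rw [if_pos h', ih, zero_comp]
          · rw [if_neg h']
        · rw [hgdef]; simp only [if_neg h]
  rw [hsum]
  apply Finset.sum_eq_zero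
  intro i _
  rw [hg i, zero_comp]


section

variable {HC : T} {c : (∐ fun i : ℕ => (d i).low) ⟶ HC}
  {δ : HC ⟶ (∐ fun i : ℕ => (d i).low)⟦(1 : ℤ)⟧} {m : HC ⟶ X}

/-- Key computation: for `W` compact lying in some `T_{≤i₀}`, the canonical map
`hocolim τ_{≤i} X ⟶ X` induces a bijection on `Hom(W, -)`. -/
lemma bij_of_compact (hU : ∀ V ∈ U, V⟦(1:ℤ)⟧ ∈ U)
    (hσ : ∀ i : ℕ, σ i ≫ (d (i + 1)).ι = (d i).ι)
    (hdist : Triangle.mk (Sigma.desc fun i : ℕ => Sigma.ι (fun j : ℕ => (d j).low) i -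
      σ i ≫ Sigma.ι (fun j : ℕ => (d j).low) (i + 1)) c δ ∈ (distTriang T))
    (hm : c ≫ m = Sigma.desc fun i : ℕ => (d i).ι)
    {W : T} (hWsurj : SurjFact W)
    {i₀ : ℕ} (hWle : W ∈ TLe T U (i₀ : ℤ)) :
    Function.Bijective (fun f : W ⟶ HC => f ≫ m) := by
  set D : (∐ fun i : ℕ => (d i).low) ⟶ (∐ fun i : ℕ => (d i).low) :=
    Sigma.desc fun i : ℕ => Sigma.ι (fun j : ℕ => (d j).low) i -
      σ i ≫ Sigma.ι (fun j : ℕ => (d j).low) (i + 1) with hD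
  constructor
  · apply inj_of_zero
    intro f hf
    -- step (a) : f ≫ δ = 0
    have hfδ : f ≫ δ = 0 := by
      set x := f ≫ δ with hxdef
      have hxD1 : x ≫ D⟦(1:ℤ)⟧' = 0 := by
        have h31 := comp_distTriang_mor_zero₃₁ _ hdist
        simp only [Triangle.mk_mor₁, Triangle.mk_mor₃] at h31
        erw [hxdef, Category.assoc, h31, comp_zero]
      set θ : shiftFunctor T (1:ℤ) ⋙ shiftFunctor T (-1:ℤ) ≅ 𝟭 T :=
        shiftFunctorCompIsoId T (1:ℤ) (-1) (by ring) with hθ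
      set x' : W⟦(-1:ℤ)⟧ ⟶ ∐ fun i : ℕ => (d i).low :=
        x⟦(-1:ℤ)⟧' ≫ θ.hom.app (∐ fun i : ℕ => (d i).low) with hx'
      have hnat : D⟦(1:ℤ)⟧'⟦(-1:ℤ)⟧' ≫ θ.hom.app (∐ fun i : ℕ => (d i).low) =
          θ.hom.app (∐ fun i : ℕ => (d i).low) ≫ D := θ.hom.naturality D
      have hx'D : x' ≫ D = 0 := by
        rw [hx', Category.assoc, ← hnat, ← Category.assoc, ← Functor.map_comp, hxD1,
          Functor.map_zero, zero_comp]
      have hx'surj : SurjFact (W⟦(-1:ℤ)⟧) := surjFact_shift hWsurj (-1)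
      have hx'0 : x' = 0 := D_cancel d σ hx'surj x' hx'D
      have hxm : x⟦(-1:ℤ)⟧' = 0 := by
        have := hx'0
        rw [hx'] at this
        rwa [← cancel_mono (θ.hom.app (∐ fun i : ℕ => (d i).low)), zero_comp]
      apply (shiftFunctor T (-1:ℤ)).map_injective
      rw [hxm, Functor.map_zero]
    -- step (b) : f factors through c
    obtain ⟨e, he⟩ := Pretriangulated.Triangle.coyoneda_exact₃ _ hdist f hfδ
    simp only [Triangle.mk_mor₂] at he
    -- step (c) : decompose e
    obtain ⟨N, g, hg⟩ := hWsurj _ e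
    -- step (d)
    set j := N + i₀ with hj
    have hWj : W ∈ TLe T U (j : ℤ) :=
      TLe_mono hU (by exact_mod_cast Nat.le_add_left i₀ N) hWle
    set et : W ⟶ (d j).low := ∑ i ∈ Finset.range N, g i ≫ trLe d σ i j with het
    have hetι : et ≫ (d j).ι = 0 := by
      rw [het, Preadditive.sum_comp]
      have h1 : ∀ i ∈ Finset.range N, (g i ≫ trLe d σ i j) ≫ (d j).ι = g i ≫ (d i).ι := by
        intro i hi
        have hi' := Finset.mem_range.mp hi
        rw [Category.assoc, trLe_ι d σ hσ i j (by omega)]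
      rw [Finset.sum_congr rfl h1]
      have h2 : ∑ i ∈ Finset.range N, g i ≫ (d i).ι = e ≫ Sigma.desc fun i : ℕ => (d i).ι := by
        erw [hg, Preadditive.sum_comp]
        apply Finset.sum_congr rfl
        intro i _
        erw [Category.assoc, Sigma.ι_desc]
      erw [h2, ← hm, ← Category.assoc, ← he]
      exact hf
    have het0 : et = 0 := by
      apply (trunc_corefl hU (d j) hWj).1
      simp only
      rw [hetι, zero_comp]
    -- step (e)
    erw [he, hg, Preadditive.sum_comp]
    have h3 : ∀ i ∈ Finset.range N, (g i ≫ Sigma.ι (fun j' : ℕ => (d j').low) i) ≫ c =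
        (g i ≫ trLe d σ i j) ≫ (Sigma.ι (fun j' : ℕ => (d j').low) j ≫ c) := by
      intro i hi
      have hi' := Finset.mem_range.mp hi
      rw [Category.assoc, κ_c_le d σ hdist i j (by omega)]
      simp only [Category.assoc]
    erw [Finset.sum_congr rfl h3, ← Preadditive.sum_comp, ← het, het0, zero_comp]
  · intro fX
    obtain ⟨f', hf'⟩ := (trunc_corefl hU (d i₀) hWle).2 fX
    refine ⟨f' ≫ Sigma.ι (fun j : ℕ => (d j).low) i₀ ≫ c, ?_⟩
    simp only [Category.assoc]
    rw [hm, Sigma.ι_desc]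
    exact hf'

end

end Hocolim
section Main
set_option linter.unusedSectionVars false

variable {U : Set T}
variable {X : T} {d : ∀ i : ℕ, TruncTriangle T U (i : ℤ) X}
  {σ : ∀ i : ℕ, (d i).low ⟶ (d (i + 1)).low}
  {HC : T} {c : (∐ fun i : ℕ => (d i).low) ⟶ HC}
  {δ : HC ⟶ (∐ fun i : ℕ => (d i).low)⟦(1 : ℤ)⟧} {m : HC ⟶ X}

/-- Main computation: `Hom(W, m)` is bijective for every `W ∈ T_{≤n}`. -/
lemma bij_of_TLe (hU' : U ⊆ Compacts T) (hU : ∀ V ∈ U, V⟦(1:ℤ)⟧ ∈ U)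
    (hσ : ∀ i : ℕ, σ i ≫ (d (i + 1)).ι = (d i).ι)
    (hdist : Triangle.mk (Sigma.desc fun i : ℕ => Sigma.ι (fun j : ℕ => (d j).low) i -
      σ i ≫ Sigma.ι (fun j : ℕ => (d j).low) (i + 1)) c δ ∈ (distTriang T))
    (hm : c ≫ m = Sigma.desc fun i : ℕ => (d i).ι)
    (n : ℤ) {W : T} (hW : W ∈ TLe T U n) :
    Function.Bijective (fun f : W ⟶ HC => f ≫ m) := by
  have main : ∀ V : T, aisleGen T U V → ∀ k : ℤ,
      (-1 ≤ k → Function.Injective (fun f : V⟦k - n⟧ ⟶ HC => f ≫ m)) ∧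
      (0 ≤ k → Function.Surjective (fun f : V⟦k - n⟧ ⟶ HC => f ≫ m)) := by
    intro V hV
    induction hV with
    | of V hVU =>
        intro k
        have hcpt : IsCompactObj T V := hU' hVU
        have hsurj : SurjFact (V⟦k - n⟧) :=
          surjFact_shift (surjFact_of_isCompact hcpt) (k - n)
        set i₀ : ℕ := (n - k).toNat with hi₀
        have hle : V⟦k - n⟧ ∈ TLe T U (i₀ : ℤ) := by
          have h1 : aisleGen T U (V⟦k - n + (i₀ : ℤ)⟧) :=
            aisleGen_shift_nonneg hU (.of V hVU) _ (by omega)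
          exact .iso _ _
            ((shiftFunctorAdd' T (k - n) (i₀ : ℤ) (k - n + (i₀ : ℤ)) rfl).app V) h1
        have hbij := bij_of_compact d σ hU hσ hdist hm hsurj hle
        exact ⟨fun _ => hbij.1, fun _ => hbij.2⟩
    | iso A B e _ ih =>
        intro k
        exact ⟨fun hk => inj_of_iso m ((shiftFunctor T (k - n)).mapIso e) ((ih k).1 hk),
          fun hk => surj_of_iso m ((shiftFunctor T (k - n)).mapIso e) ((ih k).2 hk)⟩
    | coprod Y _ ih =>
        intro k
        have hiso : (∐ fun i => (Y i)⟦k - n⟧) ≅ (∐ Y)⟦k - n⟧ :=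
          asIso (sigmaComparison (shiftFunctor T (k - n)) Y)
        constructor
        · intro hk
          apply inj_of_iso m hiso
          apply inj_of_zero
          intro f hf
          apply Sigma.hom_ext
          intro i
          rw [comp_zero]
          apply (ih i k).1 hk
          simp only
          rw [Category.assoc, hf, zero_comp, comp_zero]
        · intro hk
          apply surj_of_iso m hiso
          intro gX
          choose a ha using fun i => (ih i k).2 hk (Sigma.ι (fun i' => (Y i')⟦k - n⟧) i ≫ gX)
          refine ⟨Sigma.desc a, ?_⟩
          simp only at ha ⊢
          apply Sigma.hom_ext
          intro i
          rw [← Category.assoc, Sigma.ι_desc, ha]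
    | ext Tr hTr _ _ ih1 ih3 =>
        intro k
        set Tr' := (CategoryTheory.shiftFunctor (Pretriangulated.Triangle T) (k - n)).obj Tr
          with hTr'def
        have hTr' : Tr' ∈ distTriang T := Pretriangulated.Triangle.shift_distinguished Tr hTr _
        constructor
        · intro hk
          apply inj_of_zero
          intro f hf
          have hf1 : (Tr'.mor₁ ≫ f) ≫ m = (0 : Tr.obj₁⟦k - n⟧ ⟶ HC) ≫ m := by
            erw [Category.assoc, hf, comp_zero, zero_comp]; rfl
          have h10 : Tr'.mor₁ ≫ f = 0 := (ih1 k).1 hk hf1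
          obtain ⟨u, hu⟩ := Pretriangulated.Triangle.yoneda_exact₂ Tr' hTr' f h10
          have hu1 : Tr'.mor₂ ≫ (u ≫ m) = 0 := by
            rw [← Category.assoc, ← hu]
            exact hf
          obtain ⟨w, hw⟩ := Pretriangulated.Triangle.yoneda_exact₃ Tr' hTr' (u ≫ m) hu1
          have hsurj1 : Function.Surjective
              (fun v : (Tr.obj₁⟦k - n⟧)⟦(1:ℤ)⟧ ⟶ HC => v ≫ m) :=
            surj_of_iso m ((shiftFunctorAdd' T (k - n) 1 ((k+1) - n) (by ring)).app Tr.obj₁)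
              ((ih1 (k+1)).2 (by omega))
          obtain ⟨w', hw'⟩ := hsurj1 w
          simp only at hw'
          have hu2 : u = Tr'.mor₃ ≫ w' := by
            apply (ih3 k).1 hk
            simp only
            erw [Category.assoc, hw', ← hw]; rfl
          erw [hu, hu2, ← Category.assoc, comp_distTriang_mor_zero₂₃ _ hTr', zero_comp]; rfl
        · intro hk
          intro gX0
          let gX : Tr'.obj₂ ⟶ X := gX0
          obtain ⟨a, ha⟩ := (ih1 k).2 (by omega) (Tr'.mor₁ ≫ gX)
          simp only at ha
          have hinv := inv_rot_of_distTriang _ hTr'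
          have hz : Tr'.invRotate.mor₁ ≫ Tr'.mor₁ = 0 := comp_distTriang_mor_zero₁₂ _ hinv
          have hinj3 : Function.Injective
              (fun v : (Tr.obj₃⟦k - n⟧)⟦(-1:ℤ)⟧ ⟶ HC => v ≫ m) :=
            inj_of_iso m ((shiftFunctorAdd' T (k - n) (-1) ((k-1) - n) (by ring)).app Tr.obj₃)
              ((ih3 (k-1)).1 (by omega))
          have ht0 : Tr'.invRotate.mor₁ ≫ a = 0 := by
            apply hinj3
            simp only
            erw [Category.assoc, ha, ← Category.assoc, hz, zero_comp, zero_comp]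
          obtain ⟨b0, hb⟩ := Pretriangulated.Triangle.yoneda_exact₂ _ hinv a ht0
          let b : Tr'.obj₂ ⟶ HC := b0
          have hb' : a = Tr'.mor₁ ≫ b := hb
          have hd : Tr'.mor₁ ≫ (b ≫ m - gX) = 0 := by
            erw [Preadditive.comp_sub, ← Category.assoc, ← hb', ha, sub_self]
          obtain ⟨u, hu⟩ := Pretriangulated.Triangle.yoneda_exact₂ Tr' hTr' (b ≫ m - gX) hd
          obtain ⟨v, hv⟩ := (ih3 k).2 hk u
          simp only at hv
          refine ⟨b - Tr'.mor₂ ≫ v, ?_⟩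
          simp only
          erw [Preadditive.sub_comp, Category.assoc, hv, ← hu, sub_sub_cancel]
  have h0 := main (W⟦n⟧) hW 0
  have e : W⟦n⟧⟦(0:ℤ) - n⟧ ≅ W :=
    ((shiftFunctorAdd' T n (0 - n) 0 (by ring)).app W).symm ≪≫ (shiftFunctorZero T ℤ).app W
  exact ⟨inj_of_iso m e (h0.1 (by omega)), surj_of_iso m e (h0.2 (by omega))⟩

end Main
variable (T)

/-- Main computation in the proof of Proposition A.3 (no non-degeneracy assumption
on `U` is needed): for every object `X` of `T` and every `n : ℤ`, the canonical
morphism `hocolim_i τ_{≤i} X ⟶ X` induces an isomorphism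
`H^n(hocolim_i τ_{≤i} X) ≅ H^n(X)`. -/
theorem stmt8 (hT : CompactlyGenerated T) (U : LeftAisle T (Compacts T))
    (X : T) (d : ∀ i : ℕ, TruncTriangle T U.carrier (i : ℤ) X)
    (σ : ∀ i : ℕ, (d i).low ⟶ (d (i + 1)).low)
    (hσ : ∀ i : ℕ, σ i ≫ (d (i + 1)).ι = (d i).ι)
    (HC : T) (c : (∐ fun i : ℕ => (d i).low) ⟶ HC)
    (δ : HC ⟶ (∐ fun i : ℕ => (d i).low)⟦(1 : ℤ)⟧)
    (hdist : Triangle.mk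
      (Sigma.desc fun i : ℕ => Sigma.ι (fun j : ℕ => (d j).low) i -
        σ i ≫ Sigma.ι (fun j : ℕ => (d j).low) (i + 1)) c δ ∈ (distTriang T))
    (m : HC ⟶ X) (hm : c ≫ m = Sigma.desc fun i : ℕ => (d i).ι)
    (n : ℤ) (dH : HomologyData T U.carrier n HC) (dX : HomologyData T U.carrier n X)
    (md : HomologyMapData T U.carrier n m dH dX) :
    IsIso md.h := by

  have hU : ∀ V ∈ U.carrier, V⟦(1:ℤ)⟧ ∈ U.carrier := fun V hV => U.shift_mem V hV
  have hbijm : ∀ (W : T), W ∈ TLe T U.carrier n →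
      Function.Bijective (fun f : W ⟶ HC => f ≫ m) :=
    fun W hW => bij_of_TLe U.subset hU hσ hdist hm n hW
  have key : ∀ {W : T} (u : W ⟶ dH.t.low), (u ≫ md.g) ≫ dX.t.ι = (u ≫ dH.t.ι) ≫ m := by
    intro W u
    rw [Category.assoc, md.hg, Category.assoc]
  have bijg : ∀ {W : T}, W ∈ TLe T U.carrier n →
      Function.Bijective (fun u : W ⟶ dH.t.low => u ≫ md.g) := by
    intro W hW
    constructor
    · intro u u' huu
      simp only at huu
      have h1 : (u ≫ dH.t.ι) ≫ m = (u' ≫ dH.t.ι) ≫ m := by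
        rw [← key, ← key, huu]
      exact (trunc_corefl hU dH.t hW).1 ((hbijm W hW).1 h1)
    · intro v
      obtain ⟨a, ha⟩ := (hbijm W hW).2 (v ≫ dX.t.ι)
      simp only at ha
      obtain ⟨u, hu⟩ := (trunc_corefl hU dH.t hW).2 a
      simp only at hu
      refine ⟨u, ?_⟩
      apply (trunc_corefl hU dX.t hW).1
      simp only
      rw [key, hu, ha]
  have hgiso : IsIso md.g := by
    obtain ⟨g', hg'⟩ := (bijg dX.t.low_mem).2 (𝟙 dX.t.low)
    simp only at hg'
    have hgg' : md.g ≫ g' = 𝟙 _ := by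
      apply (bijg dH.t.low_mem).1
      simp only
      rw [Category.assoc, hg', Category.comp_id, Category.id_comp]
    exact ⟨g', hgg', hg'⟩
  obtain ⟨h', hh'⟩ := (trunc_refl hU dX.s dH.s.high_mem).2 (inv md.g ≫ dH.s.π)
  simp only at hh'
  have h1 : md.h ≫ h' = 𝟙 _ := by
    apply (trunc_refl hU dH.s dH.s.high_mem).1
    simp only
    rw [Category.comp_id, ← Category.assoc, md.hh, Category.assoc, hh',
      ← Category.assoc, IsIso.hom_inv_id, Category.id_comp]
  have h2 : h' ≫ md.h = 𝟙 _ := by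
    apply (trunc_refl hU dX.s dX.s.high_mem).1
    simp only
    rw [Category.comp_id, ← Category.assoc, hh', Category.assoc, md.hh,
      ← Category.assoc, IsIso.inv_hom_id, Category.id_comp]
  exact ⟨h', h1, h2⟩


end CYPaper
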